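/- Let Φ : ℝ^d → [0,∞) be an N_∞ function, λ > 0, and let u ∈ L^Φ([0,T],ℝ^d) satisfy d(u, L^∞) < λ, where d(u, L^∞) = inf{‖u − v‖_{L^Φ} : v ∈ L^∞([0,T],ℝ^d)}. If (u_n) is a sequence in L^Φ with ‖u_n − u‖_{L^Φ} → 0, then there exist a subsequence (u_{n_k}) and a function h ∈ L^1([0,T],ℝ) such that u_{n_k}(t) → u(t) for a.e. t ∈ [0,T] and Φ(u_{n_k}(t)/λ) ≤ h(t) for a.e. t ∈ [0,T] and every k. -/

import Mathlib

open MeasureTheory Filter Set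
open scoped ENNReal RealInnerProductSpace Topology

noncomputable section

/-- `ℝ^d` with the euclidean norm. -/
abbrev Ed (d : ℕ) : Type := EuclideanSpace ℝ (Fin d)

/-- `Φ` is an `N_∞` function: differentiable, convex, nonnegative, vanishing exactly at `0`,
even, and superlinear at infinity. -/
def IsNInf {m : ℕ} (Φ : Ed m → ℝ) : Prop :=
  Differentiable ℝ Φ ∧ ConvexOn ℝ Set.univ Φ ∧ (∀ y, 0 ≤ Φ y) ∧ Φ 0 = 0 ∧
    (∀ y, y ≠ 0 → 0 < Φ y) ∧ (∀ y, Φ (-y) = Φ y) ∧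
    Tendsto (fun y => Φ y / ‖y‖) (comap (fun y : Ed m => ‖y‖) atTop) atTop

variable {d : ℕ}

/-- The modular `ρ_Φ(u) = ∫_0^T Φ(u(t)) dt`, as an extended nonnegative real. -/
def rhoE (T : ℝ) (Φ : Ed d → ℝ) (u : ℝ → Ed d) : ℝ≥0∞ :=
  ∫⁻ t in Icc (0:ℝ) T, ENNReal.ofReal (Φ (u t))

/-- `u ∈ L^Φ([0,T], ℝ^d)`. -/
def MemLphi (T : ℝ) (Φ : Ed d → ℝ) (u : ℝ → Ed d) : Prop :=
  AEMeasurable u (volume.restrict (Icc (0:ℝ) T)) ∧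
    ∃ l : ℝ, 0 < l ∧ rhoE T Φ (fun t => l • u t) < ⊤

/-- The Luxemburg norm of `u` on `[0,T]`. -/
def luxNorm (T : ℝ) (Φ : Ed d → ℝ) (u : ℝ → Ed d) : ℝ :=
  sInf {l : ℝ | 0 < l ∧ rhoE T Φ (fun t => l⁻¹ • u t) ≤ 1}

/-- `u ∈ W^1L^Φ([0,T], ℝ^d)` with a.e. derivative `u'` : `u` is absolutely continuous,
being the integral of the (integrable) function `u'`, and `u' ∈ L^Φ`. -/
def MemW1Lphi (T : ℝ) (Φ : Ed d → ℝ) (u u' : ℝ → Ed d) : Prop :=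
  IntegrableOn u' (Icc (0:ℝ) T) ∧ MemLphi T Φ u' ∧
    ∀ t ∈ Icc (0:ℝ) T, u t = u 0 + ∫ s in (0:ℝ)..t, u' s

/-- The Luxemburg distance from `u` to `L^∞([0,T],ℝ^d)`. -/
def distLinf (T : ℝ) (Φ : Ed d → ℝ) (u : ℝ → Ed d) : ℝ :=
  sInf {r : ℝ | ∃ v : ℝ → Ed d, Measurable v ∧ (∃ C : ℝ, ∀ t, ‖v t‖ ≤ C) ∧
    r = luxNorm T Φ (fun t => u t - v t)}

namespace S12
variable {d : ℕ} {Φ : Ed d → ℝ}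

lemma combo (hΦ : IsNInf Φ) {a b : ℝ} (ha : 0 ≤ a) (hb : 0 ≤ b) (hab : a + b = 1)
    (x y : Ed d) : Φ (a • x + b • y) ≤ a * Φ x + b * Φ y :=
  hΦ.2.1.2 (mem_univ x) (mem_univ y) ha hb hab

lemma smul_le (hΦ : IsNInf Φ) {s : ℝ} (hs0 : 0 ≤ s) (hs1 : s ≤ 1) (x : Ed d) :
    Φ (s • x) ≤ s * Φ x := by
  have h := combo hΦ hs0 (by linarith : (0:ℝ) ≤ 1 - s) (by ring) x 0
  simpa [hΦ.2.2.2.1] using h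

lemma combo3 (hΦ : IsNInf Φ) {a b : ℝ} (ha : 0 ≤ a) (hb : 0 ≤ b) (hab : a + b + b = 1)
    (x y z : Ed d) : Φ (a • x + b • y + b • z) ≤ a * Φ x + b * Φ y + b * Φ z := by
  have h1 : Φ ((1/2 : ℝ) • y + (1/2 : ℝ) • z) ≤ (1/2) * Φ y + (1/2) * Φ z :=
    combo hΦ (by norm_num) (by norm_num) (by norm_num) y z
  have h2 : Φ (a • x + (2*b) • ((1/2 : ℝ) • y + (1/2 : ℝ) • z))
      ≤ a * Φ x + (2*b) * Φ ((1/2 : ℝ) • y + (1/2 : ℝ) • z) :=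
    combo hΦ ha (by linarith) (by linarith) _ _
  have hx : a • x + (2*b) • ((1/2 : ℝ) • y + (1/2 : ℝ) • z) = a • x + b • y + b • z := by
    rw [smul_add, smul_smul, smul_smul]; ring_nf; module
  rw [hx] at h2
  nlinarith [h2, h1, hb]

lemma rhoE_smul_le (hΦ : IsNInf Φ) {s : ℝ} (hs0 : 0 ≤ s) (hs1 : s ≤ 1) (T : ℝ)
    (w : ℝ → Ed d) :
    rhoE T Φ (fun t => s • w t) ≤ ENNReal.ofReal s * rhoE T Φ w := by
  unfold rhoE
  rw [← lintegral_const_mul' _ _ ENNReal.ofReal_ne_top]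
  refine lintegral_mono fun t => ?_
  rw [← ENNReal.ofReal_mul hs0]
  exact ENNReal.ofReal_le_ofReal (smul_le hΦ hs0 hs1 _)

lemma rhoE_anti (hΦ : IsNInf Φ) {l l' T : ℝ} (hl : 0 < l) (hll' : l ≤ l')
    {w : ℝ → Ed d} (h : rhoE T Φ (fun t => l⁻¹ • w t) ≤ 1) :
    rhoE T Φ (fun t => l'⁻¹ • w t) ≤ 1 := by
  have hl' : 0 < l' := hl.trans_le hll'
  have heq : (fun t => l'⁻¹ • w t) = fun t => (l/l') • (l⁻¹ • w t) := by
    funext t; rw [smul_smul]; congr 1; field_simp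
  rw [heq]
  calc rhoE T Φ (fun t => (l/l') • (l⁻¹ • w t))
      ≤ ENNReal.ofReal (l/l') * rhoE T Φ (fun t => l⁻¹ • w t) :=
        rhoE_smul_le hΦ (div_nonneg hl.le hl'.le) (div_le_one_of_le₀ hll' hl'.le) T _
    _ ≤ 1 * 1 := mul_le_mul' (ENNReal.ofReal_le_one.2 (div_le_one_of_le₀ hll' hl'.le)) h
    _ = 1 := one_mul 1

lemma exists_lux (hΦ : IsNInf Φ) {T c : ℝ} {w : ℝ → Ed d} (hc : 0 < c)
    (hfin : rhoE T Φ (fun t => c • w t) < ⊤) :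
    ∃ l : ℝ, 0 < l ∧ rhoE T Φ (fun t => l⁻¹ • w t) ≤ 1 := by
  set ρ := rhoE T Φ (fun t => c • w t) with hρ
  set s : ℝ := min 1 (1 / (ρ.toReal + 1)) with hs
  have hρt : 0 ≤ ρ.toReal := ENNReal.toReal_nonneg
  have hs0 : 0 < s := lt_min one_pos (by positivity)
  have hs1 : s ≤ 1 := min_le_left _ _
  refine ⟨(s * c)⁻¹, by positivity, ?_⟩
  have heq : (fun t => ((s*c)⁻¹)⁻¹ • w t) = fun t => s • (c • w t) := by
    funext t; rw [inv_inv, smul_smul]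
  rw [heq]
  calc rhoE T Φ (fun t => s • (c • w t)) ≤ ENNReal.ofReal s * ρ :=
        rhoE_smul_le hΦ hs0.le hs1 T _
    _ ≤ ENNReal.ofReal (1 / (ρ.toReal + 1)) * ENNReal.ofReal ρ.toReal := by
        refine mul_le_mul' (ENNReal.ofReal_le_ofReal (min_le_right _ _)) ?_
        rw [ENNReal.ofReal_toReal hfin.ne]
    _ = ENNReal.ofReal (1 / (ρ.toReal + 1) * ρ.toReal) := (ENNReal.ofReal_mul (by positivity)).symm
    _ ≤ 1 := by
        rw [← ENNReal.ofReal_one]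
        refine ENNReal.ofReal_le_ofReal ?_
        rw [div_mul_eq_mul_div, one_mul, div_le_one (by positivity)]
        linarith

lemma lux_lt_imp (hΦ : IsNInf Φ) {T r : ℝ} {w : ℝ → Ed d}
    (hne : ∃ l : ℝ, 0 < l ∧ rhoE T Φ (fun t => l⁻¹ • w t) ≤ 1)
    (hlt : luxNorm T Φ w < r) :
    rhoE T Φ (fun t => r⁻¹ • w t) ≤ 1 := by
  unfold luxNorm at hlt
  obtain ⟨l₁, h₁⟩ := hne
  obtain ⟨l, hlS, hlr⟩ := exists_lt_of_csInf_lt ⟨l₁, h₁⟩ hlt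
  exact rhoE_anti hΦ hlS.1 hlr.le hlS.2

lemma bound_ball (hΦ : IsNInf Φ) (r : ℝ) :
    ∃ M : ℝ, 0 ≤ M ∧ ∀ x : Ed d, ‖x‖ ≤ r → Φ x ≤ M := by
  obtain ⟨M, hM⟩ := ((isCompact_closedBall (0 : Ed d) r).image hΦ.1.continuous).bddAbove
  refine ⟨max M 0, le_max_right _ _, fun x hx => ?_⟩
  exact le_max_of_le_left (hM ⟨x, by simpa [Metric.mem_closedBall, dist_zero_right] using hx, rfl⟩)

lemma coercive (hΦ : IsNInf Φ) {δ : ℝ} (hδ : 0 < δ) :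
    ∃ c : ℝ, 0 < c ∧ ∀ x : Ed d, δ ≤ ‖x‖ → c ≤ Φ x := by
  have h1 : ∀ᶠ y in comap (fun y : Ed d => ‖y‖) atTop, 1 ≤ Φ y / ‖y‖ :=
    hΦ.2.2.2.2.2.2.eventually_ge_atTop 1
  rw [eventually_comap, eventually_atTop] at h1
  obtain ⟨B, hB⟩ := h1
  set B' := max (max B 1) δ with hB'
  have hB'1 : (1:ℝ) ≤ B' := le_trans (le_max_right _ _) (le_max_left _ _)
  have key : ∀ x : Ed d, B' ≤ ‖x‖ → ‖x‖ ≤ Φ x := by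
    intro x hx
    have hpos : (0:ℝ) < ‖x‖ := lt_of_lt_of_le one_pos (hB'1.trans hx)
    have h2 := hB ‖x‖ (le_trans (le_trans (le_max_left _ _) (le_max_left _ _)) hx) x rfl
    rw [le_div_iff₀ hpos] at h2
    linarith
  by_cases hann : ({x : Ed d | δ ≤ ‖x‖ ∧ ‖x‖ ≤ B'}).Nonempty
  · have hcl : IsClosed {x : Ed d | δ ≤ ‖x‖ ∧ ‖x‖ ≤ B'} :=
      (isClosed_le continuous_const continuous_norm).inter
        (isClosed_le continuous_norm continuous_const)
    have hK : IsCompact {x : Ed d | δ ≤ ‖x‖ ∧ ‖x‖ ≤ B'} := by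
      refine (isCompact_closedBall (0 : Ed d) B').of_isClosed_subset hcl ?_
      intro x hx; simpa [Metric.mem_closedBall, dist_zero_right] using hx.2
    obtain ⟨x₀, hx₀, hmin⟩ := hK.exists_isMinOn hann hΦ.1.continuous.continuousOn
    have hx₀pos : 0 < Φ x₀ := by
      refine hΦ.2.2.2.2.1 x₀ fun h => ?_
      rw [h] at hx₀; simp only [mem_setOf_eq, norm_zero] at hx₀; linarith [hx₀.1]
    refine ⟨min (Φ x₀) B', lt_min hx₀pos (lt_of_lt_of_le one_pos hB'1), fun x hx => ?_⟩
    rcases le_or_gt ‖x‖ B' with h | h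
    · exact le_trans (min_le_left _ _) (hmin ⟨hx, h⟩)
    · exact le_trans (min_le_right _ _) (le_trans h.le (key x h.le))
  · refine ⟨B', lt_of_lt_of_le one_pos hB'1, fun x hx => ?_⟩
    have h : B' < ‖x‖ := by
      by_contra hc; push_neg at hc; exact hann ⟨x, hx, hc⟩
    exact le_trans h.le (key x h.le)

lemma tendsto_zero_of_phi (hΦ : IsNInf Φ) {y : ℕ → Ed d}
    (h : Tendsto (fun k => Φ (y k)) atTop (nhds 0)) : Tendsto y atTop (nhds 0) := by
  rw [NormedAddCommGroup.tendsto_nhds_zero]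
  intro ε hε
  obtain ⟨c, hc, hcb⟩ := coercive hΦ hε
  filter_upwards [h.eventually_lt_const hc] with k hk
  by_contra hge; push_neg at hge
  exact absurd (hcb _ hge) (not_le.2 hk)

lemma rhoE_sub_fin (hΦ : IsNInf Φ) {T l₁ l₂ : ℝ} {f g : ℝ → Ed d}
    (hf' : AEMeasurable f (volume.restrict (Icc (0:ℝ) T)))
    (h₁ : 0 < l₁) (h₂ : 0 < l₂)
    (hf : rhoE T Φ (fun t => l₁ • f t) < ⊤) (hg : rhoE T Φ (fun t => l₂ • g t) < ⊤) :
    ∃ c : ℝ, 0 < c ∧ rhoE T Φ (fun t => c • (f t - g t)) < ⊤ := by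
  set c := min l₁ l₂ / 2 with hc
  have hc0 : 0 < c := by positivity
  refine ⟨c, hc0, ?_⟩
  have hptw : ∀ t, Φ (c • (f t - g t)) ≤ Φ (l₁ • f t) + Φ (l₂ • g t) := by
    intro t
    have h2c1 : 2 * c / l₁ ≤ 1 := by
      rw [div_le_one h₁, hc]
      have := min_le_left l₁ l₂; linarith
    have h2c1' : 0 ≤ 2 * c / l₁ := by positivity
    have h2c2 : 2 * c / l₂ ≤ 1 := by
      rw [div_le_one h₂, hc]
      have := min_le_right l₁ l₂; linarith
    have h2c2' : 0 ≤ 2 * c / l₂ := by positivity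
    have hd : c • (f t - g t)
        = (1/2 : ℝ) • ((2*c/l₁) • (l₁ • f t)) + (1/2 : ℝ) • (-((2*c/l₂) • (l₂ • g t))) := by
      rw [smul_sub, smul_neg, smul_smul, smul_smul, smul_smul, smul_smul,
        show (1/2 : ℝ) * (2*c/l₁) * l₁ = c by field_simp,
        show (1/2 : ℝ) * (2*c/l₂) * l₂ = c by field_simp]
      abel
    rw [hd]
    have hcb := combo hΦ (by norm_num : (0:ℝ) ≤ 1/2) (by norm_num : (0:ℝ) ≤ 1/2)
      (by norm_num) ((2*c/l₁) • (l₁ • f t)) (-((2*c/l₂) • (l₂ • g t)))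
    have hev : Φ (-((2*c/l₂) • (l₂ • g t))) = Φ ((2*c/l₂) • (l₂ • g t)) := hΦ.2.2.2.2.2.1 _
    have hb1 : Φ ((2*c/l₁) • (l₁ • f t)) ≤ Φ (l₁ • f t) := by
      calc Φ ((2*c/l₁) • (l₁ • f t)) ≤ (2*c/l₁) * Φ (l₁ • f t) := smul_le hΦ h2c1' h2c1 _
        _ ≤ 1 * Φ (l₁ • f t) := mul_le_mul_of_nonneg_right h2c1 (hΦ.2.2.1 _)
        _ = Φ (l₁ • f t) := one_mul _
    have hb2 : Φ ((2*c/l₂) • (l₂ • g t)) ≤ Φ (l₂ • g t) := by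
      calc Φ ((2*c/l₂) • (l₂ • g t)) ≤ (2*c/l₂) * Φ (l₂ • g t) := smul_le hΦ h2c2' h2c2 _
        _ ≤ 1 * Φ (l₂ • g t) := mul_le_mul_of_nonneg_right h2c2 (hΦ.2.2.1 _)
        _ = Φ (l₂ • g t) := one_mul _
    rw [hev] at hcb
    nlinarith [hΦ.2.2.1 (l₁ • f t), hΦ.2.2.1 (l₂ • g t)]
  have hm1 : AEMeasurable (fun t => ENNReal.ofReal (Φ (l₁ • f t)))
      (volume.restrict (Icc (0:ℝ) T)) :=
    (hΦ.1.continuous.measurable.comp_aemeasurable (hf'.const_smul l₁)).ennreal_ofReal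
  unfold rhoE
  calc ∫⁻ t in Icc (0:ℝ) T, ENNReal.ofReal (Φ (c • (f t - g t)))
      ≤ ∫⁻ t in Icc (0:ℝ) T,
          (ENNReal.ofReal (Φ (l₁ • f t)) + ENNReal.ofReal (Φ (l₂ • g t))) := by
        refine lintegral_mono fun t => ?_
        calc ENNReal.ofReal (Φ (c • (f t - g t)))
            ≤ ENNReal.ofReal (Φ (l₁ • f t) + Φ (l₂ • g t)) :=
              ENNReal.ofReal_le_ofReal (hptw t)
          _ ≤ _ := ENNReal.ofReal_add_le
    _ = (∫⁻ t in Icc (0:ℝ) T, ENNReal.ofReal (Φ (l₁ • f t)))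
        + ∫⁻ t in Icc (0:ℝ) T, ENNReal.ofReal (Φ (l₂ • g t)) := lintegral_add_left' hm1 _
    _ < ⊤ := ENNReal.add_lt_top.2 ⟨hf, hg⟩

lemma rhoE_bdd_fin (hΦ : IsNInf Φ) {T C : ℝ} {v : ℝ → Ed d} (hv : ∀ t, ‖v t‖ ≤ C)
    (l : ℝ) : rhoE T Φ (fun t => l • v t) < ⊤ := by
  obtain ⟨M, hM0, hMb⟩ := bound_ball hΦ (|l| * C)
  have hb : ∀ t, ENNReal.ofReal (Φ (l • v t)) ≤ ENNReal.ofReal M := by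
    intro t
    refine ENNReal.ofReal_le_ofReal (hMb _ ?_)
    rw [norm_smul, Real.norm_eq_abs]
    exact mul_le_mul_of_nonneg_left (hv t) (abs_nonneg l)
  calc rhoE T Φ (fun t => l • v t) ≤ ∫⁻ _ in Icc (0:ℝ) T, ENNReal.ofReal M :=
        lintegral_mono hb
    _ = ENNReal.ofReal M * volume (Icc (0:ℝ) T) := by
        rw [setLIntegral_const, mul_comm]
    _ < ⊤ := ENNReal.mul_lt_top ENNReal.ofReal_lt_top
        (by rw [Real.volume_Icc]; exact ENNReal.ofReal_lt_top)

end S12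

set_option maxHeartbeats 1000000 in
/-- If `u ∈ L^Φ` with `d(u, L^∞) < λ` and `‖u_n − u‖_{L^Φ} → 0`,
then some subsequence `u_{n_k}` converges to `u` a.e. and satisfies
`Φ(u_{n_k}/λ) ≤ h` a.e. for a fixed `h ∈ L¹`. -/
theorem statement12 {d : ℕ} (T : ℝ) (hT : 0 < T) (Φ : Ed d → ℝ) (hΦ : IsNInf Φ)
    (lam : ℝ) (hlam : 0 < lam) (u : ℝ → Ed d) (hu : MemLphi T Φ u)
    (hud : distLinf T Φ u < lam)
    (un : ℕ → ℝ → Ed d) (hun : ∀ n, MemLphi T Φ (un n))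
    (hconv : Tendsto (fun n => luxNorm T Φ (fun t => un n t - u t)) atTop (nhds 0)) :
    ∃ φ : ℕ → ℕ, StrictMono φ ∧ ∃ h : ℝ → ℝ, IntegrableOn h (Icc (0:ℝ) T) ∧
      (∀ᵐ t ∂(volume.restrict (Icc (0:ℝ) T)),
        Tendsto (fun k => un (φ k) t) atTop (nhds (u t))) ∧
      ∀ᵐ t ∂(volume.restrict (Icc (0:ℝ) T)), ∀ k, Φ (lam⁻¹ • un (φ k) t) ≤ h t := by
  classical
  -- Step 1: choose a bounded `v` with `luxNorm (u - v) < lam`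
  have hS : {r : ℝ | ∃ v : ℝ → Ed d, Measurable v ∧ (∃ C : ℝ, ∀ t, ‖v t‖ ≤ C) ∧
      r = luxNorm T Φ (fun t => u t - v t)}.Nonempty :=
    ⟨luxNorm T Φ (fun t => u t - (fun _ : ℝ => (0 : Ed d)) t),
      (fun _ : ℝ => (0 : Ed d)), measurable_const, ⟨0, fun t => by simp⟩, rfl⟩
  have hud' : sInf {r : ℝ | ∃ v : ℝ → Ed d, Measurable v ∧ (∃ C : ℝ, ∀ t, ‖v t‖ ≤ C) ∧
      r = luxNorm T Φ (fun t => u t - v t)} < lam := hud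
  obtain ⟨r, ⟨v, hvmeas, ⟨C, hvC⟩, hr⟩, hrlt⟩ := exists_lt_of_csInf_lt hS hud'
  have hC0 : 0 ≤ C := le_trans (norm_nonneg _) (hvC 0)
  set w0 : ℝ → Ed d := fun t => u t - v t with hw0def
  have hw0m : AEMeasurable w0 (volume.restrict (Icc (0:ℝ) T)) := hu.1.sub hvmeas.aemeasurable
  obtain ⟨l₀, hl₀, hρ₀⟩ := hu.2
  have hvfin : rhoE T Φ (fun t => (1:ℝ) • v t) < ⊤ := S12.rhoE_bdd_fin hΦ hvC 1
  obtain ⟨c₀, hc₀, hfin₀⟩ := S12.rhoE_sub_fin hΦ hu.1 hl₀ one_pos hρ₀ hvfin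
  have hlux₀ : ∃ l : ℝ, 0 < l ∧ rhoE T Φ (fun t => l⁻¹ • w0 t) ≤ 1 :=
    S12.exists_lux hΦ hc₀ hfin₀
  have hr0 : 0 ≤ r := by
    rw [hr]; exact Real.sInf_nonneg fun l hl => hl.1.le
  set μ' := (r + lam)/2 with hμ'
  have hμ'0 : 0 < μ' := by rw [hμ']; linarith
  have hμ'lam : μ' < lam := by rw [hμ']; linarith
  have hρw0 : rhoE T Φ (fun t => μ'⁻¹ • w0 t) ≤ 1 := by
    refine S12.lux_lt_imp hΦ hlux₀ ?_
    rw [← hr, hμ']; linarith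
  set δ := lam - μ' with hδ
  have hδ0 : 0 < δ := by rw [hδ]; linarith
  set a := μ'/lam with ha
  set b := δ/(2*lam) with hb
  have ha0 : 0 ≤ a := by positivity
  have hb0 : 0 ≤ b := by positivity
  have hab : a + b + b = 1 := by
    rw [ha, hb, hδ]; field_simp; ring
  have hb1 : b ≤ 1 := by
    rw [hb, hδ, div_le_one (by linarith)]; linarith
  set ε₀ := min (δ/2) 1 with hε₀
  have hε₀0 : 0 < ε₀ := lt_min (by linarith) one_pos
  have hε₀1 : ε₀ ≤ 1 := min_le_right _ _
  set εs : ℕ → ℝ := fun k => ε₀ * (2⁻¹:ℝ)^k with hεs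
  have hεs0 : ∀ k, 0 < εs k := fun k => by rw [hεs]; positivity
  have hεs1 : ∀ k, εs k ≤ 1 := fun k => by
    rw [hεs]
    calc ε₀ * (2⁻¹:ℝ)^k ≤ 1 * 1 :=
      mul_le_mul hε₀1 (pow_le_one₀ (by norm_num) (by norm_num)) (by positivity) one_pos.le
    _ = 1 := one_mul 1
  -- Step 2: extract the subsequence
  obtain ⟨φ, hφmono, hφlt⟩ := extraction_forall_of_eventually
    (P := fun k n => luxNorm T Φ (fun t => un n t - u t) < εs k)
    (fun k => hconv.eventually_lt_const (hεs0 k))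
  set w : ℕ → ℝ → Ed d := fun k t => un (φ k) t - u t with hwdef
  have hwm : ∀ k, AEMeasurable (w k) (volume.restrict (Icc (0:ℝ) T)) :=
    fun k => (hun (φ k)).1.sub hu.1
  have hw1 : ∀ k, rhoE T Φ (fun t => (εs k)⁻¹ • w k t) ≤ 1 := by
    intro k
    obtain ⟨l₁, hl₁, hρ₁⟩ := (hun (φ k)).2
    obtain ⟨c, hc, hfin⟩ := S12.rhoE_sub_fin hΦ (hun (φ k)).1 hl₁ hl₀ hρ₁ hρ₀
    exact S12.lux_lt_imp hΦ (S12.exists_lux hΦ hc hfin) (hφlt k)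
  -- Step 3: the dominating series
  set g : ℕ → ℝ → ℝ≥0∞ :=
    fun k t => ENNReal.ofReal ((2⁻¹:ℝ)^k * Φ ((εs k)⁻¹ • w k t)) with hgdef
  have hgm : ∀ k, AEMeasurable (g k) (volume.restrict (Icc (0:ℝ) T)) := fun k =>
    (aemeasurable_const.mul
      (hΦ.1.continuous.measurable.comp_aemeasurable ((hwm k).const_smul (εs k)⁻¹))).ennreal_ofReal
  have hgint : ∀ k, (∫⁻ t in Icc (0:ℝ) T, g k t) ≤ ENNReal.ofReal ((2⁻¹:ℝ)^k) := by
    intro k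
    have heq : ∀ t, g k t
        = ENNReal.ofReal ((2⁻¹:ℝ)^k) * ENNReal.ofReal (Φ ((εs k)⁻¹ • w k t)) := fun t => by
      rw [hgdef]; exact ENNReal.ofReal_mul (by positivity)
    calc (∫⁻ t in Icc (0:ℝ) T, g k t)
        = ENNReal.ofReal ((2⁻¹:ℝ)^k) * rhoE T Φ (fun t => (εs k)⁻¹ • w k t) := by
          simp_rw [heq]; rw [lintegral_const_mul' _ _ ENNReal.ofReal_ne_top]; rfl
      _ ≤ ENNReal.ofReal ((2⁻¹:ℝ)^k) * 1 := mul_le_mul_right (hw1 k) _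
      _ = _ := mul_one _
  set G : ℝ → ℝ≥0∞ := fun t => ∑' k, g k t with hGdef
  have hGm : AEMeasurable G (volume.restrict (Icc (0:ℝ) T)) := AEMeasurable.ennreal_tsum hgm
  have hsum : (∑' k : ℕ, ENNReal.ofReal ((2⁻¹:ℝ)^k)) ≠ ⊤ := by
    have heq : ∀ k : ℕ, ENNReal.ofReal ((2⁻¹:ℝ)^k) = (2⁻¹:ℝ≥0∞)^k := fun k => by
      rw [ENNReal.ofReal_pow (by norm_num), ENNReal.ofReal_inv_of_pos two_pos,
        ENNReal.ofReal_ofNat]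
    simp_rw [heq, ENNReal.tsum_geometric, ENNReal.one_sub_inv_two]
    simp
  have hGint : (∫⁻ t in Icc (0:ℝ) T, G t) ≠ ⊤ := by
    refine ne_top_of_le_ne_top hsum ?_
    calc (∫⁻ t in Icc (0:ℝ) T, G t) = ∑' k, ∫⁻ t in Icc (0:ℝ) T, g k t :=
          lintegral_tsum hgm
      _ ≤ _ := ENNReal.tsum_le_tsum hgint
  have hGae : ∀ᵐ t ∂(volume.restrict (Icc (0:ℝ) T)), G t < ⊤ := ae_lt_top' hGm hGint
  -- Step 4: the dominating function
  obtain ⟨M, hM0, hMb⟩ := S12.bound_ball hΦ ((2/δ) * C)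
  set x₁ : ℝ → Ed d := fun t => μ'⁻¹ • w0 t with hx₁def
  set H : ℝ → ℝ≥0∞ := fun t => ENNReal.ofReal (a * Φ (x₁ t) + b * M) + G t with hHdef
  have hx₁m : AEMeasurable (fun t => ENNReal.ofReal a * ENNReal.ofReal (Φ (x₁ t)))
      (volume.restrict (Icc (0:ℝ) T)) :=
    aemeasurable_const.mul
      ((hΦ.1.continuous.measurable.comp_aemeasurable (hw0m.const_smul μ'⁻¹)).ennreal_ofReal)
  have hphi : AEMeasurable (fun t => Φ (x₁ t)) (volume.restrict (Icc (0:ℝ) T)) :=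
    hΦ.1.continuous.measurable.comp_aemeasurable (hw0m.const_smul μ'⁻¹)
  have hmr : AEMeasurable (fun t => ENNReal.ofReal (a * Φ (x₁ t) + b * M))
      (volume.restrict (Icc (0:ℝ) T)) :=
    ((hphi.const_mul a).add aemeasurable_const).ennreal_ofReal
  have hHm : AEMeasurable H (volume.restrict (Icc (0:ℝ) T)) := hmr.add hGm
  have h1int : (∫⁻ t in Icc (0:ℝ) T, ENNReal.ofReal (a * Φ (x₁ t) + b * M)) ≠ ⊤ := by
    have hble : ∀ t, ENNReal.ofReal (a * Φ (x₁ t) + b * M)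
        ≤ ENNReal.ofReal a * ENNReal.ofReal (Φ (x₁ t)) + ENNReal.ofReal (b*M) := fun t => by
      calc ENNReal.ofReal (a * Φ (x₁ t) + b * M)
          ≤ ENNReal.ofReal (a * Φ (x₁ t)) + ENNReal.ofReal (b*M) := ENNReal.ofReal_add_le
        _ = _ := by rw [ENNReal.ofReal_mul ha0]
    refine ne_top_of_le_ne_top ?_ (lintegral_mono hble)
    rw [lintegral_add_left' hx₁m, lintegral_const_mul' _ _ ENNReal.ofReal_ne_top,
      setLIntegral_const]
    refine ENNReal.add_ne_top.2 ⟨ENNReal.mul_ne_top ENNReal.ofReal_ne_top ?_,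
      ENNReal.mul_ne_top ENNReal.ofReal_ne_top ?_⟩
    · exact ne_top_of_le_ne_top ENNReal.one_ne_top hρw0
    · rw [Real.volume_Icc]; exact ENNReal.ofReal_ne_top
  have hHint : (∫⁻ t in Icc (0:ℝ) T, H t) ≠ ⊤ := by
    rw [hHdef, lintegral_add_left' hmr]
    exact ENNReal.add_ne_top.2 ⟨h1int, hGint⟩
  refine ⟨φ, hφmono, fun t => (H t).toReal, ?_, ?_, ?_⟩
  · exact integrable_toReal_of_lintegral_ne_top hHm hHint
  · -- a.e. convergence
    filter_upwards [hGae] with t ht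
    have hg0 : Tendsto (fun k => g k t) atTop (nhds 0) :=
      ENNReal.tendsto_atTop_zero_of_tsum_ne_top ht.ne
    have hgr : Tendsto (fun k => (2⁻¹:ℝ)^k * Φ ((εs k)⁻¹ • w k t)) atTop (nhds 0) := by
      have h2 := (ENNReal.tendsto_toReal (a := 0) (by simp)).comp hg0
      simp only [ENNReal.toReal_zero, Function.comp_def] at h2
      have heq : ∀ k, (g k t).toReal = (2⁻¹:ℝ)^k * Φ ((εs k)⁻¹ • w k t) := fun k => by
        rw [hgdef]
        exact ENNReal.toReal_ofReal (mul_nonneg (by positivity) (hΦ.2.2.1 _))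
      simpa [heq] using h2
    have hΦw : Tendsto (fun k => Φ (w k t)) atTop (nhds 0) := by
      have hlim : Tendsto (fun k => ε₀ * ((2⁻¹:ℝ)^k * Φ ((εs k)⁻¹ • w k t))) atTop (nhds 0) := by
        simpa using hgr.const_mul ε₀
      refine squeeze_zero (fun k => hΦ.2.2.1 _) (fun k => ?_) hlim
      have hwk : w k t = εs k • ((εs k)⁻¹ • w k t) := by
        rw [smul_smul, mul_inv_cancel₀ (hεs0 k).ne', one_smul]
      calc Φ (w k t) = Φ (εs k • ((εs k)⁻¹ • w k t)) := by rw [← hwk]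
        _ ≤ εs k * Φ ((εs k)⁻¹ • w k t) := S12.smul_le hΦ (hεs0 k).le (hεs1 k) _
        _ = ε₀ * ((2⁻¹:ℝ)^k * Φ ((εs k)⁻¹ • w k t)) := by rw [hεs]; ring
    have hwt : Tendsto (fun k => w k t) atTop (nhds 0) := S12.tendsto_zero_of_phi hΦ hΦw
    have hfin : Tendsto (fun k => u t + w k t) atTop (nhds (u t + 0)) :=
      tendsto_const_nhds.add hwt
    simpa [hwdef] using hfin
  · -- domination
    filter_upwards [hGae] with t ht
    intro k
    have hdec : lam⁻¹ • un (φ k) t = a • x₁ t + b • ((2/δ) • v t) + b • ((2/δ) • w k t) := by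
      rw [hx₁def]
      simp only [smul_smul]
      rw [show a * μ'⁻¹ = lam⁻¹ by rw [ha]; field_simp,
        show b * (2/δ) = lam⁻¹ by rw [hb]; field_simp]
      rw [hw0def, hwdef]
      module
    have h3 := S12.combo3 hΦ ha0 hb0 hab (x₁ t) ((2/δ) • v t) ((2/δ) • w k t)
    rw [← hdec] at h3
    have hv2 : Φ ((2/δ) • v t) ≤ M := by
      refine hMb _ ?_
      rw [norm_smul, Real.norm_eq_abs, abs_of_nonneg (by positivity)]
      exact mul_le_mul_of_nonneg_left (hvC t) (by positivity)
    have hw2 : Φ ((2/δ) • w k t) ≤ (2⁻¹:ℝ)^k * Φ ((εs k)⁻¹ • w k t) := by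
      have hrw : (2/δ) • w k t = ((2/δ) * εs k) • ((εs k)⁻¹ • w k t) := by
        rw [smul_smul, mul_assoc, mul_inv_cancel₀ (hεs0 k).ne', mul_one]
      have hsle : (2/δ) * εs k ≤ (2⁻¹:ℝ)^k := by
        rw [hεs]
        calc (2/δ) * (ε₀ * (2⁻¹:ℝ)^k) ≤ (2/δ) * ((δ/2) * (2⁻¹:ℝ)^k) := by
              refine mul_le_mul_of_nonneg_left ?_ (by positivity)
              exact mul_le_mul_of_nonneg_right (min_le_left _ _) (by positivity)
          _ = (2⁻¹:ℝ)^k := by field_simp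
      have hs0' : 0 ≤ (2/δ) * εs k := le_of_lt (by have := hεs0 k; positivity)
      have hs1' : (2/δ) * εs k ≤ 1 :=
        hsle.trans (pow_le_one₀ (by norm_num) (by norm_num))
      calc Φ ((2/δ) • w k t) = Φ (((2/δ) * εs k) • ((εs k)⁻¹ • w k t)) := by rw [← hrw]
        _ ≤ ((2/δ) * εs k) * Φ ((εs k)⁻¹ • w k t) := S12.smul_le hΦ hs0' hs1' _
        _ ≤ _ := mul_le_mul_of_nonneg_right hsle (hΦ.2.2.1 _)
    have key : Φ (lam⁻¹ • un (φ k) t)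
        ≤ a * Φ (x₁ t) + b * M + (2⁻¹:ℝ)^k * Φ ((εs k)⁻¹ • w k t) := by
      have t1 : b * Φ ((2/δ) • v t) ≤ b * M := mul_le_mul_of_nonneg_left hv2 hb0
      have t2 : b * Φ ((2/δ) • w k t) ≤ (2⁻¹:ℝ)^k * Φ ((εs k)⁻¹ • w k t) := by
        calc b * Φ ((2/δ) • w k t)
            ≤ b * ((2⁻¹:ℝ)^k * Φ ((εs k)⁻¹ • w k t)) := mul_le_mul_of_nonneg_left hw2 hb0
          _ ≤ 1 * ((2⁻¹:ℝ)^k * Φ ((εs k)⁻¹ • w k t)) :=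
              mul_le_mul_of_nonneg_right hb1
                (mul_nonneg (by positivity) (hΦ.2.2.1 _))
          _ = _ := one_mul _
      linarith [h3, t1, t2]
    have hofR : ENNReal.ofReal (Φ (lam⁻¹ • un (φ k) t)) ≤ H t := by
      calc ENNReal.ofReal (Φ (lam⁻¹ • un (φ k) t))
          ≤ ENNReal.ofReal (a * Φ (x₁ t) + b * M + (2⁻¹:ℝ)^k * Φ ((εs k)⁻¹ • w k t)) :=
            ENNReal.ofReal_le_ofReal key
        _ ≤ ENNReal.ofReal (a * Φ (x₁ t) + b * M)
            + ENNReal.ofReal ((2⁻¹:ℝ)^k * Φ ((εs k)⁻¹ • w k t)) := ENNReal.ofReal_add_le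
        _ ≤ ENNReal.ofReal (a * Φ (x₁ t) + b * M) + G t := by
            refine add_le_add_right ?_ _
            rw [hGdef]
            exact ENNReal.le_tsum k
        _ = H t := by rw [hHdef]
    have hHne : H t ≠ ⊤ := by
      rw [hHdef]
      exact ENNReal.add_ne_top.2 ⟨ENNReal.ofReal_ne_top, ht.ne⟩
    calc Φ (lam⁻¹ • un (φ k) t)
        = (ENNReal.ofReal (Φ (lam⁻¹ • un (φ k) t))).toReal :=
          (ENNReal.toReal_ofReal (hΦ.2.2.1 _)).symm
      _ ≤ (H t).toReal := ENNReal.toReal_mono hHne hofR
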